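/- Let (x^k), (y^k) be a DCA sequence for minimizing f = g − h over C with x^0 ∈ C. Suppose g is ρ_g-strongly convex on C and h is ρ_h-strongly convex on C with ρ_g + ρ_h > 0. Then the sufficiently descent property holds: f(x^k) − f(x^{k+1}) ≥ ((ρ_g + ρ_h)/2)·‖x^k − x^{k+1}‖² for every k ≥ 1. -/
import Mathlib


open scoped RealInnerProductSpace
open Filter Topology

lemma aux_limit (A B c D : ℝ) (hc : 0 ≤ c) (hD : 0 ≤ D)
    (H : ∀ t : ℝ, 0 < t → t < 1 → A ≤ B - c * t * D) : A ≤ B - c * D := by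
  refine le_of_forall_pos_le_add ?_
  intro ε hε
  have hcD1 : 0 < c * D + 1 := by positivity
  have hεd : 0 < ε / (c * D + 1) := by positivity
  set t : ℝ := max (1 - ε / (c * D + 1)) (1/2) with ht
  have ht0 : 0 < t := lt_of_lt_of_le (by norm_num) (le_max_right _ _)
  have ht1 : t < 1 := max_lt (by linarith) (by norm_num)
  have hH := H t ht0 ht1
  have h4 : 1 - ε / (c * D + 1) ≤ t := le_max_left _ _
  have h5 : 1 - t ≤ ε / (c * D + 1) := by linarith
  have h6 : c * D * (1 - t) ≤ c * D * (ε / (c * D + 1)) :=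
    mul_le_mul_of_nonneg_left h5 (by positivity)
  have h7 : c * D * (ε / (c * D + 1)) ≤ ε := by
    have he : c * D * (ε / (c * D + 1)) = (c * D * ε) / (c * D + 1) := by ring
    rw [he, div_le_iff₀ hcD1]
    nlinarith
  nlinarith

lemma combo_norm {E : Type*} [NormedAddCommGroup E] [InnerProductSpace ℝ E]
    (a b : E) (t : ℝ) :
    ‖(1 - t) • a + t • b‖ ^ 2 = (1 - t) * ‖a‖ ^ 2 + t * ‖b‖ ^ 2 - t * (1 - t) * ‖a - b‖ ^ 2 := by
  have h1 : ∀ u : E, ‖u‖ ^ 2 = ⟪u, u⟫ := fun u => (real_inner_self_eq_norm_sq u).symm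
  rw [h1, h1, h1, h1]
  simp only [inner_add_add_self, inner_sub_sub_self, real_inner_smul_left,
    real_inner_smul_right, real_inner_comm a b]
  ring

/-- sufficiently descent property of DCA under strong convexity. -/
theorem stmt_1
    {E : Type*} [NormedAddCommGroup E] [InnerProductSpace ℝ E] [FiniteDimensional ℝ E]
    (C : Set E) (hCne : C.Nonempty) (hCclosed : IsClosed C) (hCconv : Convex ℝ C)
    (g h : E → ℝ) (hg : ConvexOn ℝ Set.univ g) (hh : ConvexOn ℝ Set.univ h)
    (f : E → ℝ) (hf : ∀ z, f z = g z - h z)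
    (ρg ρh : ℝ) (hρg0 : 0 ≤ ρg) (hρh0 : 0 ≤ ρh) (hρ : 0 < ρg + ρh)
    (hsg : ConvexOn ℝ C (fun z => g z - ρg / 2 * ‖z‖ ^ 2))
    (hsh : ConvexOn ℝ C (fun z => h z - ρh / 2 * ‖z‖ ^ 2))
    (x y : ℕ → E)
    (hx0 : x 0 ∈ C)
    (hsub : ∀ k, ∀ z, h z ≥ h (x k) + ⟪y k, z - x k⟫)
    (hxC : ∀ k, x (k + 1) ∈ C)
    (hmin : ∀ k, ∀ z ∈ C, g (x (k + 1)) - ⟪y k, x (k + 1)⟫ ≤ g z - ⟪y k, z⟫) :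
    ∀ k, 1 ≤ k →
      f (x k) - f (x (k + 1)) ≥ (ρg + ρh) / 2 * ‖x k - x (k + 1)‖ ^ 2 := by
  intro k hk
  obtain ⟨m, rfl⟩ : ∃ m, k = m + 1 := ⟨k - 1, (Nat.succ_pred_eq_of_pos hk).symm⟩
  set a := x (m + 1) with ha
  set b := x (m + 1 + 1) with hb
  have haC : a ∈ C := hxC m
  have hbC : b ∈ C := hxC (m + 1)
  set Y := y (m + 1) with hY
  have hDnn : (0:ℝ) ≤ ‖a - b‖ ^ 2 := by positivity
  have hzt : ∀ t : ℝ, 0 < t → t < 1 → (1 - t) • a + t • b ∈ C := fun t ht0 ht1 =>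
    hCconv haC hbC (by linarith) (le_of_lt ht0) (by ring)
  have hinner : ∀ t : ℝ, ⟪Y, (1 - t) • a + t • b⟫
      = (1 - t) * ⟪Y, a⟫ + t * ⟪Y, b⟫ := by
    intro t
    rw [inner_add_right, real_inner_smul_right, real_inner_smul_right]
  -- Claim 1
  have claim1 : g b - ⟪Y, b⟫ ≤ (g a - ⟪Y, a⟫) - (ρg / 2) * ‖a - b‖ ^ 2 := by
    apply aux_limit _ _ _ _ (by positivity) hDnn
    intro t ht0 ht1
    have hmem := hzt t ht0 ht1
    have hconv := hsg.2 haC hbC (by linarith : (0:ℝ) ≤ 1 - t) (le_of_lt ht0) (by ring)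
    simp only [smul_eq_mul] at hconv
    rw [combo_norm] at hconv
    have hm := hmin (m + 1) _ hmem
    rw [hinner t] at hm
    have h1t : 0 < 1 - t := by linarith
    nlinarith [hm, hconv]
  -- Claim 2
  have claim2 : h a + ⟪Y, b - a⟫ ≤ h b - (ρh / 2) * ‖a - b‖ ^ 2 := by
    apply aux_limit _ _ _ _ (by positivity) hDnn
    intro t ht0 ht1
    have ht0' : (0:ℝ) < 1 - t := by linarith
    have hconv := hsh.2 haC hbC (le_of_lt ht0) (le_of_lt ht0') (by ring)
    simp only [smul_eq_mul] at hconv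
    have hsb := hsub (m + 1) (t • a + (1 - t) • b)
    rw [← ha, ← hY] at hsb
    have heq : (t • a + (1 - t) • b) - a = (1 - t) • (b - a) := by
      module
    rw [heq, real_inner_smul_right] at hsb
    have hcn' : ‖t • a + (1 - t) • b‖ ^ 2
        = t * ‖a‖ ^ 2 + (1 - t) * ‖b‖ ^ 2 - (1 - t) * t * ‖a - b‖ ^ 2 := by
      have h2 := combo_norm a b (1 - t)
      have h3 : (1 - (1 - t)) = t := by ring
      rw [h3] at h2
      linarith [h2]
    rw [hcn'] at hconv
    nlinarith [hsb, hconv]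
  have hinnsum : ⟪Y, b - a⟫ = ⟪Y, b⟫ - ⟪Y, a⟫ := inner_sub_right _ _ _
  rw [hf, hf]
  nlinarith [claim1, claim2]
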